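/- Let G be a graph on vertex set X ∪ Y with X = {x_1,...,x_n}, Y = {y_1,...,y_n} disjoint, where X is a minimal vertex cover, Y is a maximal independent set, and x_i y_i ∈ E(G) for all i (a perfect matching). Then G is unmixed (all minimal vertex covers have cardinality n) if and only if: (i) for distinct i,j,k and z_i ∈ {x_i, y_i}, if z_i x_j ∈ E(G) and y_j x_k ∈ E(G), then z_i x_k ∈ E(G); and (ii) if x_i y_j ∈ E(G) then x_i x_j ∉ E(G). -/

import Mathlib

open Relation

/-- `C` is a vertex cover of `G`. -/
def IsVC {V : Type*} (G : SimpleGraph V) (C : Set V) : Prop :=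
  ∀ ⦃u v : V⦄, G.Adj u v → u ∈ C ∨ v ∈ C

/-- `C` is a minimal vertex cover of `G`. -/
def IsMinVC {V : Type*} (G : SimpleGraph V) (C : Set V) : Prop :=
  IsVC G C ∧ ∀ D : Set V, IsVC G D → D ⊆ C → D = C

/-- `S` is an independent set of `G`. -/
def IsIndep {V : Type*} (G : SimpleGraph V) (S : Set V) : Prop :=
  ∀ u ∈ S, ∀ v ∈ S, ¬ G.Adj u v

/-- `S` is a maximal independent set of `G`. -/
def IsMaxIndep {V : Type*} (G : SimpleGraph V) (S : Set V) : Prop :=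
  IsIndep G S ∧ ∀ T : Set V, IsIndep G T → S ⊆ T → T = S

/-- `G` has no isolated vertices. -/
def NoIsolated {V : Type*} (G : SimpleGraph V) : Prop := ∀ v, ∃ w, G.Adj v w

/-- The vertex set `{x_1,...,x_n} ∪ {y_1,...,y_n}`: `xv i = Sum.inl i`, `yv i = Sum.inr i`. -/
abbrev Vtx (n : ℕ) := Fin n ⊕ Fin n

def xv {n : ℕ} (i : Fin n) : Vtx n := Sum.inl i
def yv {n : ℕ} (i : Fin n) : Vtx n := Sum.inr i

/-- Condition (∗): X is a minimal vertex cover, Y is a maximal independent set,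
and `x_i y_i` is an edge for every `i`. -/
def StarCond {n : ℕ} (G : SimpleGraph (Vtx n)) : Prop :=
  IsMinVC G (Set.range xv) ∧ IsMaxIndep G (Set.range yv) ∧ ∀ i, G.Adj (xv i) (yv i)

/-- Condition (∗∗): `x_i y_j ∈ E(G)` implies `i ≤ j`. -/
def StarStarCond {n : ℕ} (G : SimpleGraph (Vtx n)) : Prop :=
  ∀ i j : Fin n, G.Adj (xv i) (yv j) → i ≤ j

/-- Condition (i): for distinct `i,j,k` and `z_i ∈ {x_i,y_i}`, if `z_i x_j` and `y_j x_k`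
are edges then so is `z_i x_k`. -/
def CondI {n : ℕ} (G : SimpleGraph (Vtx n)) : Prop :=
  ∀ i j k : Fin n, i ≠ j → j ≠ k → i ≠ k →
    ∀ z ∈ ({xv i, yv i} : Set (Vtx n)),
      G.Adj z (xv j) → G.Adj (yv j) (xv k) → G.Adj z (xv k)

/-- Condition (ii): `x_i y_j ∈ E(G)` implies `x_i x_j ∉ E(G)`. -/
def CondII {n : ℕ} (G : SimpleGraph (Vtx n)) : Prop :=
  ∀ i j : Fin n, G.Adj (xv i) (yv j) → ¬ G.Adj (xv i) (xv j)

/-- The minimum vertex cover size of `G` (the height of the edge ideal) is at least `n`. -/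
def HeightN {n : ℕ} (G : SimpleGraph (Vtx n)) : Prop :=
  ∀ C : Finset (Vtx n), IsVC G ↑C → n ≤ C.card

/-- Directed edge `i → j` of the semidirected graph `𝔡_G`. -/
def dirEdge {n : ℕ} (G : SimpleGraph (Vtx n)) (i j : Fin n) : Prop :=
  i ≠ j ∧ G.Adj (xv i) (yv j)

/-- Undirected edge `ij` of the semidirected graph `𝔡_G`. -/
def undirEdge {n : ℕ} (G : SimpleGraph (Vtx n)) (i j : Fin n) : Prop :=
  G.Adj (xv i) (xv j)


section AuxUnmixed

variable {n : ℕ}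

def vidx {n : ℕ} : Vtx n → Fin n := Sum.elim id id

lemma priv_edge {G : SimpleGraph (Vtx n)} {C : Finset (Vtx n)}
    (hC : IsMinVC G (↑C : Set (Vtx n))) {v : Vtx n} (hv : v ∈ C) :
    ∃ u, G.Adj v u ∧ u ∉ C := by
  by_contra h
  push_neg at h
  have hD : IsVC G ((↑C : Set (Vtx n)) \ {v}) := by
    intro a b hab
    rcases hC.1 hab with ha | hb
    · by_cases hav : a = v
      · subst hav
        right
        have hbC : b ∈ C := h b hab
        exact ⟨hbC, fun hb' => G.irrefl (show G.Adj a a by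
          rw [Set.mem_singleton_iff] at hb'; rwa [hb'] at hab)⟩
      · exact Or.inl ⟨ha, hav⟩
    · by_cases hbv : b = v
      · subst hbv
        left
        have haC : a ∈ C := h a hab.symm
        exact ⟨haC, fun ha' => G.irrefl (show G.Adj b b by
          rw [Set.mem_singleton_iff] at ha'; rwa [ha'] at hab)⟩
      · exact Or.inr ⟨hb, hbv⟩
  have heq := hC.2 _ hD Set.diff_subset
  have hv' : v ∈ (↑C : Set (Vtx n)) \ {v} := by rw [heq]; exact hv
  exact hv'.2 rfl

lemma exists_max_ext (G : SimpleGraph (Vtx n)) (S0 : Finset (Vtx n))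
    (h0 : IsIndep G (↑S0 : Set (Vtx n))) :
    ∃ T : Finset (Vtx n), S0 ⊆ T ∧ IsMaxIndep G (↑T : Set (Vtx n)) := by
  classical
  let F : Finset (Finset (Vtx n)) :=
    Finset.univ.filter (fun T : Finset (Vtx n) => S0 ⊆ T ∧ IsIndep G (↑T : Set (Vtx n)))
  have hS0 : S0 ∈ F := by simp [F, h0]
  obtain ⟨T, hTF, hmax⟩ := F.exists_max_image Finset.card ⟨S0, hS0⟩
  simp only [F, Finset.mem_filter, Finset.mem_univ, true_and] at hTF
  refine ⟨T, hTF.1, hTF.2, ?_⟩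
  intro T' hT' hsub
  have hfin : T'.Finite := Set.toFinite _
  have hsub2 : T ⊆ hfin.toFinset := by
    intro a ha
    rw [Set.Finite.mem_toFinset]
    exact hsub ha
  have hmem : hfin.toFinset ∈ F := by
    simp only [F, Finset.mem_filter, Finset.mem_univ, true_and]
    constructor
    · exact fun a ha => hsub2 (hTF.1 ha)
    · rw [Set.Finite.coe_toFinset]; exact hT'
  have hcard := hmax _ hmem
  have heq : T = hfin.toFinset := Finset.eq_of_subset_of_card_le hsub2 hcard
  rw [← Set.Finite.coe_toFinset hfin, ← heq]

lemma compl_minVC {G : SimpleGraph (Vtx n)} {T : Finset (Vtx n)}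
    (hT : IsMaxIndep G (↑T : Set (Vtx n))) : IsMinVC G (↑(Tᶜ) : Set (Vtx n)) := by
  classical
  rw [Finset.coe_compl]
  constructor
  · intro u v huv
    by_contra h
    push_neg at h
    rw [Set.notMem_compl_iff, Set.notMem_compl_iff] at h
    exact hT.1 u h.1 v h.2 huv
  · intro D hD hsub
    have hDc : IsIndep G Dᶜ := fun u hu v hv huv => (hD huv).elim hu hv
    have hTD : (↑T : Set (Vtx n)) ⊆ Dᶜ := by
      intro a ha haD
      exact (hsub haD) ha
    have heq := hT.2 _ hDc hTD
    rw [← compl_compl D, heq]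

lemma injOn_vidx {C : Finset (Vtx n)}
    (h : ∀ i : Fin n, ¬(xv i ∈ C ∧ yv i ∈ C)) : Set.InjOn vidx (↑C : Set (Vtx n)) := by
  intro a ha b hb hab
  rw [Finset.mem_coe] at ha hb
  rcases a with a | a <;> rcases b with b | b <;>
    simp only [vidx, Sum.elim_inl, Sum.elim_inr, id] at hab <;> subst hab
  · rfl
  · exact absurd ⟨ha, hb⟩ (h a)
  · exact absurd ⟨hb, ha⟩ (h a)
  · rfl

lemma card_le_of_one_per_pair {C : Finset (Vtx n)}
    (h : ∀ i : Fin n, ¬(xv i ∈ C ∧ yv i ∈ C)) : C.card ≤ n := by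
  have hle : C.card ≤ (Finset.univ : Finset (Fin n)).card :=
    Finset.card_le_card_of_injOn vidx (fun a _ => Finset.mem_univ _) (injOn_vidx h)
  simpa using hle

lemma card_compl_ne {G : SimpleGraph (Vtx n)} (hm : ∀ i, G.Adj (xv i) (yv i))
    {T : Finset (Vtx n)} (hT : IsIndep G (↑T : Set (Vtx n))) (j : Fin n)
    (hxj : xv j ∉ T) (hyj : yv j ∉ T) : (Tᶜ).card ≠ n := by
  classical
  have hone : ∀ i : Fin n, ¬(xv i ∈ T ∧ yv i ∈ T) := by
    intro i ⟨h1, h2⟩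
    exact hT _ h1 _ h2 (hm i)
  have hle : T.card ≤ (Finset.univ.erase j).card := by
    apply Finset.card_le_card_of_injOn vidx ?_ (injOn_vidx hone)
    intro a ha
    rw [Finset.mem_coe, Finset.mem_erase]
    refine ⟨?_, Finset.mem_univ _⟩
    rcases a with a | a <;> simp only [vidx, Sum.elim_inl, Sum.elim_inr, id] <;>
      rintro rfl
    · exact hxj ha
    · exact hyj ha
  have h1 : (Finset.univ.erase j).card = n - 1 := by
    rw [Finset.card_erase_of_mem (Finset.mem_univ _)]; simp
  have h2 : (Tᶜ).card = Fintype.card (Vtx n) - T.card := Finset.card_compl T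
  have h3 : Fintype.card (Vtx n) = n + n := by simp
  have h4 : 0 < n := j.pos
  omega

lemma not_both {G : SimpleGraph (Vtx n)} (hstar : StarCond G)
    (hI : CondI G) (hII : CondII G) {C : Finset (Vtx n)}
    (hC : IsMinVC G (↑C : Set (Vtx n))) (i : Fin n)
    (hx : xv i ∈ C) (hy : yv i ∈ C) : False := by
  obtain ⟨u, huadj, huC⟩ := priv_edge hC hy
  obtain ⟨j, rfl⟩ : ∃ j, u = xv j := by
    rcases u with j | j
    · exact ⟨j, rfl⟩
    · exact absurd huadj (hstar.2.1.1 _ ⟨i, rfl⟩ _ ⟨j, rfl⟩)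
  have hij : i ≠ j := by rintro rfl; exact huC hx
  obtain ⟨a, haadj, haC⟩ := priv_edge hC hx
  rcases a with k | k
  · -- haadj : G.Adj (xv i) (xv k)
    have hki : k ≠ i := by rintro rfl; exact G.irrefl haadj
    by_cases hkj : k = j
    · subst hkj
      exact hII _ _ huadj.symm haadj.symm
    · have hadj := hI k i j hki hij hkj (xv k) (Set.mem_insert _ _) haadj.symm huadj
      rcases hC.1 hadj with h | h
      · exact haC h
      · exact huC h
  · -- haadj : G.Adj (xv i) (yv k)
    have hki : k ≠ i := by rintro rfl; exact haC hy
    by_cases hkj : k = j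
    · subst hkj
      rcases hC.1 (hstar.2.2 k) with h | h
      · exact huC h
      · exact haC h
    · have hadj := hI k i j hki hij hkj (yv k)
        (Set.mem_insert_of_mem _ rfl) haadj.symm huadj
      rcases hC.1 hadj with h | h
      · exact haC h
      · exact huC h

end AuxUnmixed

/-- Proposition 2.3 of [CRT]. Let `G` be a graph with `2n` non-isolated
vertices, minimum vertex cover size `n`, satisfying condition (∗). Then `G` is unmixed
(all minimal vertex covers have cardinality `n`) iff conditions (i) and (ii) hold. -/

theorem unmixed_iff_conditions {n : ℕ} (G : SimpleGraph (Vtx n))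
    (hiso : NoIsolated G) (hht : HeightN G) (hstar : StarCond G) :
    (∀ C : Finset (Vtx n), IsMinVC G ↑C → C.card = n) ↔ (CondI G ∧ CondII G) := by
  classical
  constructor
  · intro hU
    constructor
    · intro i j k hij hjk hik z hz h1 h2
      by_contra hzk
      have hzk' : ¬ G.Adj (xv k) z := fun h => hzk h.symm
      have h0 : IsIndep G (↑({z, xv k} : Finset (Vtx n)) : Set (Vtx n)) := by
        intro u hu v hv huv
        simp only [Finset.coe_insert, Finset.coe_singleton, Set.mem_insert_iff,
          Set.mem_singleton_iff] at hu hv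
        rcases hu with rfl | rfl <;> rcases hv with rfl | rfl
        · exact G.irrefl huv
        · exact hzk huv
        · exact hzk' huv
        · exact G.irrefl huv
      obtain ⟨T, hsub, hTmax⟩ := exists_max_ext G _ h0
      have hz' : z ∈ T := hsub (Finset.mem_insert_self _ _)
      have hk' : xv k ∈ T := hsub (by simp)
      have hxj : xv j ∉ T := fun h => hTmax.1 z hz' _ h h1
      have hyj : yv j ∉ T := fun h => hTmax.1 _ hk' _ h h2.symm
      exact card_compl_ne hstar.2.2 hTmax.1 j hxj hyj (hU Tᶜ (compl_minVC hTmax))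
    · intro i j h1 h2
      have h0 : IsIndep G (↑({xv i} : Finset (Vtx n)) : Set (Vtx n)) := by
        intro u hu v hv huv
        simp only [Finset.coe_singleton, Set.mem_singleton_iff] at hu hv
        subst hu; subst hv; exact G.irrefl huv
      obtain ⟨T, hsub, hTmax⟩ := exists_max_ext G _ h0
      have hi' : xv i ∈ T := hsub (by simp)
      have hxj : xv j ∉ T := fun h => hTmax.1 _ hi' _ h h2
      have hyj : yv j ∉ T := fun h => hTmax.1 _ hi' _ h h1
      exact card_compl_ne hstar.2.2 hTmax.1 j hxj hyj (hU Tᶜ (compl_minVC hTmax))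
  · rintro ⟨hI, hII⟩ C hC
    refine le_antisymm ?_ (hht C hC.1)
    exact card_le_of_one_per_pair (fun i ⟨hx, hy⟩ => not_both hstar hI hII hC i hx hy)
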